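/- Let (R, m) be a Noetherian local ring and I an m-primary ideal. If f ∈ I is a superficial element such that f is a nonzerodivisor and dim R/(f) = dim R − 1, then e(I·(R/(f)), R/(f)) = e(I, R). -/

import Mathlib

set_option linter.unusedSectionVars false
set_option maxHeartbeats 1000000

open Order Filter Finset




section LatticeAdd

variable {α : Type*} [Lattice α] [IsModularLattice α]

/-- Height of an element of a lower-set subtype equals its height in the ambient order. -/
lemma height_subtype_le_eq {a : α} (y : {x : α // x ≤ a}) :
    Order.height y = Order.height (y : α) := by
  apply le_antisymm
  · exact height_le_height_apply_of_strictMono (fun z : {x : α // x ≤ a} => (z : α)) (fun _ _ h => h) y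
  · apply height_le
    intro p hp
    let q : LTSeries {x : α // x ≤ a} :=
      ⟨p.length, fun i => ⟨p i, le_trans (le_of_le_of_eq (p.monotone (Fin.le_last i)) hp) y.2⟩,
        fun i => p.step i⟩
    have hlast : q.last = y := Subtype.ext (by simpa [q, RelSeries.last] using hp)
    have := length_le_height_last (p := q)
    rwa [hlast] at this

lemma length_le_height_inf_add_sup (a : α) (p : LTSeries α) (i : Fin (p.length + 1)) :
    (i : ℕ) ≤ Order.height (p i ⊓ a) +
      Order.height (⟨p i ⊔ a, le_sup_right⟩ : {x : α // a ≤ x}) := by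
  induction i using Fin.induction with
  | zero => simp
  | succ i ih =>
    have hstep : p i.castSucc < p i.succ := p.step i
    have hpair := strictMono_inf_prod_sup (z := a) hstep
    rw [Prod.lt_iff] at hpair
    set x := p i.castSucc with hx
    set y := p i.succ with hy
    have hinfle : x ⊓ a ≤ y ⊓ a := inf_le_inf_right a hstep.le
    have hsuple : (⟨x ⊔ a, le_sup_right⟩ : {x : α // a ≤ x}) ≤ ⟨y ⊔ a, le_sup_right⟩ :=
      sup_le_sup_right hstep.le a
    have hcast : ((i.succ : Fin (p.length + 1)) : ℕ) = (i : ℕ) + 1 := by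
      simp [Fin.val_succ]
    rw [hcast]
    push_cast
    rcases hpair with ⟨h1, h2⟩ | ⟨h1, h2⟩
    · -- x ⊓ a < y ⊓ a
      by_cases htop : Order.height (x ⊓ a) = ⊤
      · have : Order.height (y ⊓ a) = ⊤ :=
          top_le_iff.mp (htop ▸ height_mono hinfle)
        rw [this]; simp
      · have hlt : Order.height (x ⊓ a) + 1 ≤ Order.height (y ⊓ a) :=
          (ENat.add_one_le_iff htop).mpr (height_strictMono h1 (lt_top_iff_ne_top.mpr htop))
        have h2' : Order.height (⟨x ⊔ a, le_sup_right⟩ : {x : α // a ≤ x}) ≤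
            Order.height (⟨y ⊔ a, le_sup_right⟩ : {x : α // a ≤ x}) :=
          height_mono (by exact_mod_cast h2)
        calc ((i : ℕ) : ℕ∞) + 1
            ≤ (Order.height (x ⊓ a) + Order.height (⟨x ⊔ a, le_sup_right⟩ : {x : α // a ≤ x})) + 1 :=
              add_le_add_left ih 1
          _ = (Order.height (x ⊓ a) + 1) + Order.height (⟨x ⊔ a, le_sup_right⟩ : {x : α // a ≤ x}) := by
              ring
          _ ≤ _ := add_le_add hlt h2'
    · -- x ⊔ a < y ⊔ a
      have h2sub : (⟨x ⊔ a, le_sup_right⟩ : {x : α // a ≤ x}) < ⟨y ⊔ a, le_sup_right⟩ := by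
        exact_mod_cast h2
      by_cases htop : Order.height (⟨x ⊔ a, le_sup_right⟩ : {x : α // a ≤ x}) = ⊤
      · have : Order.height (⟨y ⊔ a, le_sup_right⟩ : {x : α // a ≤ x}) = ⊤ :=
          top_le_iff.mp (htop ▸ height_mono hsuple)
        rw [this]; simp
      · have hlt : Order.height (⟨x ⊔ a, le_sup_right⟩ : {x : α // a ≤ x}) + 1 ≤
            Order.height (⟨y ⊔ a, le_sup_right⟩ : {x : α // a ≤ x}) :=
          (ENat.add_one_le_iff htop).mpr (height_strictMono h2sub (lt_top_iff_ne_top.mpr htop))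
        have h1' : Order.height (x ⊓ a) ≤ Order.height (y ⊓ a) := height_mono (by exact_mod_cast h1)
        calc ((i : ℕ) : ℕ∞) + 1
            ≤ (Order.height (x ⊓ a) + Order.height (⟨x ⊔ a, le_sup_right⟩ : {x : α // a ≤ x})) + 1 :=
              add_le_add_left ih 1
          _ = Order.height (x ⊓ a) + (Order.height (⟨x ⊔ a, le_sup_right⟩ : {x : α // a ≤ x}) + 1) := by
              ring
          _ ≤ _ := add_le_add h1' hlt

variable [OrderTop α]

lemma height_top_add_eq (a : α) :
    Order.height (⊤ : α) =
      Order.height a + Order.height (⟨⊤, le_top⟩ : {x : α // a ≤ x}) := by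
  apply le_antisymm
  · apply height_le
    intro p hp
    have h := length_le_height_inf_add_sup a p (Fin.last _)
    have hlast : p (Fin.last _) = ⊤ := hp
    rw [hlast] at h
    simpa [Fin.val_last, top_inf_eq, top_sup_eq] using h
  · rcases eq_or_ne (Order.height a) ⊤ with h | h
    · have : (⊤ : ℕ∞) ≤ Order.height (⊤ : α) := h ▸ height_mono le_top
      rw [h, top_add]; exact this
    rcases eq_or_ne (Order.height (⟨⊤, le_top⟩ : {x : α // a ≤ x})) ⊤ with h2 | h2
    · have hle : Order.height (⟨⊤, le_top⟩ : {x : α // a ≤ x}) ≤ Order.height (⊤ : α) :=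
        height_le_height_apply_of_strictMono (fun z : {x : α // a ≤ x} => (z : α)) (fun _ _ hh => hh) ⟨⊤, le_top⟩
      rw [h2] at hle
      rw [h2, add_top]; exact hle
    · obtain ⟨n, hn⟩ : ∃ n : ℕ, Order.height a = n := ⟨_, (ENat.coe_toNat h).symm⟩
      obtain ⟨m, hm⟩ : ∃ m : ℕ, Order.height (⟨⊤, le_top⟩ : {x : α // a ≤ x}) = m :=
        ⟨_, (ENat.coe_toNat h2).symm⟩
      obtain ⟨p, hpl, hplen⟩ := exists_series_of_height_eq_coe a hn
      obtain ⟨q0, hql, hqlen⟩ := exists_series_of_height_eq_coe _ hm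
      let q : LTSeries α := q0.map (fun z => (z : α)) (fun _ _ hh => hh)
      have hqlast : q.last = ⊤ := by
        have : q.last = ((q0.last : {x : α // a ≤ x}) : α) := by
          simp [q, RelSeries.last, LTSeries.map]
          rfl
        rw [this, hql]
      have hqhead : a ≤ q.head := by
        have : q.head = ((q0.head : {x : α // a ≤ x}) : α) := by
          simp [q, RelSeries.head, LTSeries.map]
          rfl
        rw [this]; exact q0.head.2
      rw [hn, hm]
      rcases eq_or_lt_of_le hqhead with he | hl
      · let r := p.smash q (by rw [hpl, ← he])
        have hrlen : r.length = n + m := by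
          simp [r, RelSeries.smash_length, hplen, hqlen, q, LTSeries.map]
        have hrlast : r.last = ⊤ := by rw [RelSeries.last_smash]; exact hqlast
        have := length_le_height_last (p := r)
        rw [hrlast, hrlen] at this
        exact_mod_cast this
      · let r := p.append q (by rw [hpl]; exact hl)
        have hrlen : r.length = n + m + 1 := by
          simp [r, RelSeries.append_length, hplen, hqlen, q, LTSeries.map]
        have hrlast : r.last = ⊤ := by rw [RelSeries.last_append]; exact hqlast
        have := length_le_height_last (p := r)
        rw [hrlast, hrlen] at this
        calc ((n : ℕ∞) + m) ≤ ((n : ℕ∞) + m) + 1 := le_self_add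
          _ = ((n + m + 1 : ℕ) : ℕ∞) := by push_cast; ring
          _ ≤ _ := this

end LatticeAdd


/-- The length of an `R`-module `M`, computed as the Krull dimension of its
lattice of submodules (equal to the usual length for finite-length modules). -/
noncomputable def moduleLength (R M : Type*) [CommRing R] [AddCommGroup M] [Module R M] : ℕ :=
  ((Order.krullDim (Submodule R M)).unbotD 0).toNat

/-- `e` is the Hilbert–Samuel multiplicity of the ideal `I` in the `d`-dimensional
ring `R`: `e = lim_n d! · length(R/Iⁿ)/nᵈ`, i.e. `d!` times the leading coefficient
of the Hilbert–Samuel polynomial `n ↦ length(R/Iⁿ)`. -/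
noncomputable def HasHSMultiplicity (R : Type*) [CommRing R] (I : Ideal R) (d : ℕ) (e : ℝ) : Prop :=
  Filter.Tendsto
    (fun n : ℕ => ((Nat.factorial d : ℝ) * (moduleLength R (R ⧸ I ^ n) : ℝ)) / (n : ℝ) ^ d)
    Filter.atTop (nhds e)

/-- `f` is a superficial element for the ideal `I`:
`(I^(n+1) : f) ∩ I^c = I^n` for all large `n`. -/
def Superficial {R : Type*} [CommRing R] (I : Ideal R) (f : R) : Prop :=
  ∃ c : ℕ, ∀ n ≥ c, (I ^ (n + 1)).colon (Ideal.span {f}) ⊓ I ^ c = I ^ n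







/-- finite-or-infinite length as the height of `⊤` in the submodule lattice -/
noncomputable def hlen (R M : Type*) [CommRing R] [AddCommGroup M] [Module R M] : ℕ∞ :=
  Order.height (⊤ : Submodule R M)

section ModuleLayer
variable {R : Type*} [CommRing R] {M M' : Type*} [AddCommGroup M] [Module R M]
  [AddCommGroup M'] [Module R M']

lemma moduleLength_eq_hlen : moduleLength R M = (hlen R M).toNat := by
  unfold moduleLength hlen
  rw [← height_top_eq_krullDim, WithBot.unbotD_coe]

lemma hlen_congr (e : M ≃ₗ[R] M') : hlen R M = hlen R M' := by
  have f : Submodule R M ≃o Submodule R M' := Submodule.orderIsoMapComap e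
  have := height_orderIso f (⊤ : Submodule R M)
  rw [OrderIso.map_top] at this
  exact this.symm


lemma hlen_add (N : Submodule R M) : hlen R M = hlen R N + hlen R (M ⧸ N) := by
  rw [hlen, height_top_add_eq N]
  congr 1
  · -- height N = hlen R ↥N
    have h1 := height_orderIso (Submodule.MapSubtype.orderIso N) (⊤ : Submodule R N)
    have hft : (Submodule.MapSubtype.orderIso N) ⊤ = ⟨N, le_rfl⟩ := by
      apply Subtype.ext
      show Submodule.map N.subtype ⊤ = N
      rw [Submodule.map_top, Submodule.range_subtype]
    rw [hft] at h1
    have h2 : Order.height (⟨N, le_rfl⟩ : {p' : Submodule R M // p' ≤ N}) = Order.height N :=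
      height_subtype_le_eq (⟨N, le_rfl⟩ : {p' : Submodule R M // p' ≤ N})
    exact h2.symm.trans h1
  · have h1 := height_orderIso (Submodule.comapMkQRelIso N) (⊤ : Submodule R (M ⧸ N))
    have hft : (Submodule.comapMkQRelIso N) ⊤ = ⟨⊤, Set.mem_Ici.mpr le_top⟩ := by
      apply Subtype.ext
      show Submodule.comap N.mkQ ⊤ = ⊤
      exact Submodule.comap_top _
    rw [hft] at h1
    exact h1

lemma height_le_one_of_simpleOrder {β : Type*} [PartialOrder β] [BoundedOrder β]
    [IsSimpleOrder β] (x : β) : Order.height x ≤ 1 := by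
  rw [show (1 : ℕ∞) = ((1 : ℕ) : ℕ∞) from rfl, height_le_coe_iff]
  intro y hy
  have hyb : y = ⊥ := by
    rcases IsSimpleOrder.eq_bot_or_eq_top y with h | h
    · exact h
    · exact absurd (h ▸ hy) not_top_lt
  subst hyb
  have : Order.height (⊥ : β) = 0 := by simp
  rw [this]
  exact_mod_cast zero_lt_one

lemma hlen_ne_top [IsNoetherian R M] [IsArtinian R M] : hlen R M ≠ ⊤ := by
  have h : IsFiniteLength R M := isFiniteLength_iff_isNoetherian_isArtinian.mpr ⟨‹_›, ‹_›⟩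
  induction' h with M _ _ _ M _ _ N _ hN ih
  · -- subsingleton
    have : IsMin (⊤ : Submodule R M) := by
      intro b _
      exact le_of_eq (Subsingleton.elim _ _)
    rw [hlen, Order.height_eq_zero.mpr this]
    exact ENat.zero_ne_top
  · rw [hlen_add N]
    have hsimple : hlen R (M ⧸ N) ≤ 1 := height_le_one_of_simpleOrder _
    exact WithTop.add_ne_top.mpr ⟨ih, ne_top_of_le_ne_top ENat.one_ne_top hsimple⟩

lemma moduleLength_add_of_ne_top (N : Submodule R M)
    (h1 : hlen R N ≠ ⊤) (h2 : hlen R (M ⧸ N) ≠ ⊤) :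
    moduleLength R M = moduleLength R N + moduleLength R (M ⧸ N) := by
  rw [moduleLength_eq_hlen, moduleLength_eq_hlen, moduleLength_eq_hlen, hlen_add N,
    ENat.toNat_add h1 h2]

end ModuleLayer







section Restrict
variable {R S : Type*} [CommRing R] [CommRing S]

/-- Submodule lattices agree along a surjective change of scalars. -/
def submoduleOrderIsoOfSurjective (σ : R →+* S) (hσ : Function.Surjective σ)
    (X : Type*) [AddCommGroup X] [Module R X] [Module S X]
    (hcomp : ∀ (r : R) (x : X), r • x = σ r • x) :
    Submodule S X ≃o Submodule R X where
  toFun p :=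
    { carrier := p
      add_mem' := fun ha hb => p.add_mem ha hb
      zero_mem' := p.zero_mem
      smul_mem' := fun r x hx => by rw [hcomp]; exact p.smul_mem _ hx }
  invFun q :=
    { carrier := q
      add_mem' := fun ha hb => q.add_mem ha hb
      zero_mem' := q.zero_mem
      smul_mem' := fun s x hx => by
        obtain ⟨r, rfl⟩ := hσ s
        rw [← hcomp]
        exact q.smul_mem r hx }
  left_inv p := by apply SetLike.ext; intro x; rfl
  right_inv q := by apply SetLike.ext; intro x; rfl
  map_rel_iff' := Iff.rfl

lemma hlen_eq_of_surjective (σ : R →+* S) (hσ : Function.Surjective σ)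
    (X : Type*) [AddCommGroup X] [Module R X] [Module S X]
    (hcomp : ∀ (r : R) (x : X), r • x = σ r • x) :
    hlen S X = hlen R X := by
  have h := height_orderIso (submoduleOrderIsoOfSurjective σ hσ X hcomp) (⊤ : Submodule S X)
  have ht : (submoduleOrderIsoOfSurjective σ hσ X hcomp) ⊤ = ⊤ := by
    apply SetLike.ext; intro x; simp [submoduleOrderIsoOfSurjective]
  rw [ht] at h
  exact h.symm

end Restrict

section QuotQuot
variable {R : Type*} [CommRing R]

lemma hlen_quot_quot (J : Ideal R) (K : Ideal (R ⧸ J)) :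
    hlen (R ⧸ J) ((R ⧸ J) ⧸ K) = hlen R (R ⧸ K.comap (Ideal.Quotient.mk J)) := by
  have h1 : hlen (R ⧸ J) ((R ⧸ J) ⧸ K) = hlen R ((R ⧸ J) ⧸ K) :=
    hlen_eq_of_surjective (Ideal.Quotient.mk J) Ideal.Quotient.mk_surjective _
      (fun r x => by
        rw [← Ideal.Quotient.algebraMap_eq, algebraMap_smul])
  rw [h1]
  -- linear equiv over R
  let φ : R →ₗ[R] ((R ⧸ J) ⧸ K) := (K.mkQ.restrictScalars R).comp (Submodule.mkQ (J : Submodule R R))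
  have hsurj : Function.Surjective φ := by
    intro z
    obtain ⟨y, rfl⟩ := Submodule.Quotient.mk_surjective _ z
    obtain ⟨x, rfl⟩ := Ideal.Quotient.mk_surjective y
    exact ⟨x, rfl⟩
  have hker : LinearMap.ker φ = (K.comap (Ideal.Quotient.mk J) : Submodule R R) := by
    ext x
    show φ x = 0 ↔ _
    have : φ x = Submodule.Quotient.mk (Ideal.Quotient.mk J x) := rfl
    rw [this, Submodule.Quotient.mk_eq_zero]
    rfl
  have e : (R ⧸ (K.comap (Ideal.Quotient.mk J) : Submodule R R)) ≃ₗ[R] ((R ⧸ J) ⧸ K) :=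
    (Submodule.quotEquivOfEq _ _ hker.symm).trans (LinearMap.quotKerEquivOfSurjective φ hsurj)
  exact (hlen_congr e).symm

end QuotQuot

section Torsion
variable {R : Type*} [CommRing R]

lemma hlen_ne_top_of_torsion (X : Type*) [AddCommGroup X] [Module R X] [Module.Finite R X]
    {mI : Ideal R} [mI.IsMaximal] (h : Module.IsTorsionBySet R X mI) : hlen R X ≠ ⊤ := by
  letI : Module (R ⧸ mI) X := h.module
  haveI : IsScalarTower R (R ⧸ mI) X := h.isScalarTower
  letI : Field (R ⧸ mI) := Ideal.Quotient.field mI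
  haveI : Module.Finite (R ⧸ mI) X := Module.Finite.of_restrictScalars_finite R _ _
  haveI : IsNoetherian (R ⧸ mI) X := isNoetherian_of_isNoetherianRing_of_finite _ _
  haveI : IsArtinian (R ⧸ mI) X := isArtinian_of_fg_of_artinian'
  have hfin : hlen (R ⧸ mI) X ≠ ⊤ := hlen_ne_top
  have heq : hlen (R ⧸ mI) X = hlen R X :=
    hlen_eq_of_surjective (Ideal.Quotient.mk mI) Ideal.Quotient.mk_surjective X
      (fun r x => by rw [← Ideal.Quotient.algebraMap_eq, algebraMap_smul])
  rwa [heq] at hfin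

lemma hlen_quot_ne_top [IsNoetherianRing R] [IsLocalRing R] :
    ∀ (k : ℕ) (J : Ideal R), (IsLocalRing.maximalIdeal R) ^ k ≤ J →
      hlen R (R ⧸ J) ≠ ⊤ := by
  intro k
  induction k with
  | zero =>
    intro J hJ
    rw [pow_zero, Ideal.one_eq_top, top_le_iff] at hJ
    subst hJ
    haveI : Subsingleton (R ⧸ (⊤ : Ideal R)) :=
      Submodule.Quotient.subsingleton_iff.mpr rfl
    have : IsMin (⊤ : Submodule R (R ⧸ (⊤ : Ideal R))) := by
      intro b _
      intro x hx
      have : x = 0 := Subsingleton.elim _ _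
      rw [this]; exact b.zero_mem
    rw [hlen, Order.height_eq_zero.mpr this]
    exact ENat.zero_ne_top
  | succ k ih =>
    intro J hJ
    set m := IsLocalRing.maximalIdeal R
    set J' : Ideal R := J ⊔ m ^ k with hJ'
    set N : Submodule R (R ⧸ J) := Submodule.map (Submodule.mkQ (J : Submodule R R)) J' with hN
    have e2 : ((R ⧸ J) ⧸ N) ≃ₗ[R] (R ⧸ J') :=
      Submodule.quotientQuotientEquivQuotient (J : Submodule R R) J' le_sup_left
    have hq : hlen R ((R ⧸ J) ⧸ N) ≠ ⊤ := by
      rw [hlen_congr e2]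
      exact ih J' le_sup_right
    have hNfin : hlen R N ≠ ⊤ := by
      haveI : Module.Finite R N := Module.Finite.iff_fg.mpr (IsNoetherian.noetherian N)
      refine hlen_ne_top_of_torsion (↥N) (mI := m) ?_
      intro x r
      obtain ⟨y, hy, hxy⟩ := Submodule.mem_map.mp x.2
      apply Subtype.ext
      show ((r : R) • (x : R ⧸ J) : R ⧸ J) = 0
      rw [← hxy]
      have : (r : R) • (Submodule.mkQ (J : Submodule R R) y) =
          Submodule.mkQ (J : Submodule R R) ((r : R) • y) := by
        rw [map_smul]
      rw [this]
      rw [Submodule.mkQ_apply, Submodule.Quotient.mk_eq_zero]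
      -- (r : R) • y ∈ J
      obtain ⟨u, hu, v, hv, rfl⟩ := Submodule.mem_sup.mp hy
      have h1 : (r : R) • u ∈ J := J.smul_mem _ hu
      have h2 : (r : R) • v ∈ J := by
        apply hJ
        have : v * (r : R) ∈ m ^ k * m := Ideal.mul_mem_mul hv r.2
        rw [← pow_succ] at this
        simpa [smul_eq_mul, mul_comm] using this
      have := Submodule.add_mem J h1 h2
      simpa [smul_eq_mul, mul_add] using this
    rw [hlen_add N]
    exact WithTop.add_ne_top.mpr ⟨hNfin, hq⟩

end Torsion








section Colon
variable {R : Type*} [CommRing R]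

lemma mul_mem_pow_succ {I : Ideal R} {f x : R} (hfI : f ∈ I) {n : ℕ} (hx : x ∈ I ^ n) :
    x * f ∈ I ^ (n + 1) := by
  have : x * f ∈ I ^ n * I := Ideal.mul_mem_mul hx hfI
  rwa [← pow_succ] at this

lemma colon_eventually_eq [IsNoetherianRing R] (I : Ideal R) (f : R) (hfI : f ∈ I)
    (hsup : Superficial I f) (hnzd : f ∈ nonZeroDivisors R) :
    ∃ N₀ : ℕ, ∀ n ≥ N₀, (I ^ (n + 1)).colon (Ideal.span {f}) = I ^ n := by
  obtain ⟨c, hc⟩ := hsup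
  obtain ⟨k, hk⟩ := Ideal.exists_pow_inf_eq_pow_smul I ((Ideal.span {f} : Ideal R) : Submodule R R)
  refine ⟨c + k, fun n hn => ?_⟩
  have hnc : n ≥ c := le_trans (Nat.le_add_right c k) hn
  apply le_antisymm
  · intro x hx
    have hfx : x * f ∈ I ^ (n + 1) := by
      have := Submodule.mem_colon_span_singleton.mp hx
      simpa [smul_eq_mul] using this
    have h1 : x * f ∈ (I ^ (n+1) • (⊤ : Submodule R R)) ⊓ (Ideal.span {f} : Submodule R R) := by
      constructor
      · simpa using hfx
      · exact Ideal.mem_span_singleton'.mpr ⟨x, rfl⟩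
    rw [hk (n+1) (by omega)] at h1
    have h2 : x * f ∈ I ^ (n + 1 - k) • (Submodule.span R {f}) :=
      SetLike.le_def.mp (smul_mono_right _ (le_trans inf_le_right (le_of_eq rfl))) h1
    obtain ⟨y, hy, hyf⟩ := Submodule.mem_smul_span_singleton.mp h2
    have hxy : y = x := by
      have h0 : (y - x) * f = 0 := by
        have hyx : y * f = x * f := by simpa [smul_eq_mul] using hyf
        rw [sub_mul, hyx, sub_self]
      exact sub_eq_zero.mp (hnzd.2 _ h0)
    have hxc : x ∈ I ^ c := by
      rw [← hxy]
      exact (Ideal.pow_le_pow_right (by omega)) hy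
    rw [← hc n hnc]
    exact ⟨hx, hxc⟩
  · intro x hx
    apply Submodule.mem_colon_span_singleton.mpr
    rw [smul_eq_mul]
    exact mul_mem_pow_succ hfI hx

end Colon

section Step
variable {R : Type*} [CommRing R]

lemma hlen_step (I : Ideal R) (f : R) (hfI : f ∈ I) (n : ℕ)
    (hcolon : (I ^ (n + 1)).colon (Ideal.span {f}) = I ^ n) :
    hlen R (R ⧸ I ^ (n + 1)) =
      hlen R (R ⧸ I ^ n) + hlen R (R ⧸ (I ^ (n + 1) ⊔ Ideal.span {f})) := by
  have hle : (I ^ n : Submodule R R) ≤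
      Submodule.comap (LinearMap.lsmul R R f) (I ^ (n+1) : Submodule R R) := by
    intro x hx
    show f • x ∈ (I ^ (n+1) : Submodule R R)
    rw [smul_eq_mul, mul_comm]
    exact mul_mem_pow_succ hfI hx
  let φ : (R ⧸ (I ^ n : Submodule R R)) →ₗ[R] (R ⧸ (I ^ (n+1) : Submodule R R)) :=
    Submodule.mapQ _ _ (LinearMap.lsmul R R f) hle
  have hφ : ∀ x : R, φ (Submodule.Quotient.mk x) = Submodule.Quotient.mk (f * x) := by
    intro x
    simp only [φ, Submodule.mapQ_apply, LinearMap.lsmul_apply, smul_eq_mul]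
  have hker : LinearMap.ker φ = ⊥ := by
    rw [eq_bot_iff]
    rintro a ha
    obtain ⟨x, rfl⟩ := Submodule.Quotient.mk_surjective _ a
    rw [LinearMap.mem_ker, hφ, Submodule.Quotient.mk_eq_zero] at ha
    have : x ∈ I ^ n := by
      rw [← hcolon]
      apply Submodule.mem_colon_span_singleton.mpr
      rwa [smul_eq_mul, mul_comm]
    rw [Submodule.mem_bot, Submodule.Quotient.mk_eq_zero]
    exact this
  have hinj : Function.Injective φ := LinearMap.ker_eq_bot.mp hker
  let e1 : (R ⧸ (I ^ n : Submodule R R)) ≃ₗ[R] LinearMap.range φ := LinearEquiv.ofInjective φ hinj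
  set T : Ideal R := I ^ (n+1) ⊔ Ideal.span {f} with hT
  have hrange : LinearMap.range φ =
      Submodule.map (Submodule.mkQ (I ^ (n+1) : Submodule R R)) (T : Submodule R R) := by
    ext z
    constructor
    · rintro ⟨a, rfl⟩
      obtain ⟨x, rfl⟩ := Submodule.Quotient.mk_surjective _ a
      refine ⟨f * x, ?_, ?_⟩
      · exact Submodule.mem_sup_right (Ideal.mem_span_singleton'.mpr ⟨x, mul_comm x f⟩)
      · rw [Submodule.mkQ_apply, hφ]
    · rintro ⟨y, hy, rfl⟩
      obtain ⟨u, hu, v, hv, rfl⟩ := Submodule.mem_sup.mp hy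
      obtain ⟨cc, rfl⟩ := Ideal.mem_span_singleton'.mp hv
      refine ⟨Submodule.Quotient.mk cc, ?_⟩
      rw [hφ, Submodule.mkQ_apply]
      rw [Submodule.Quotient.eq]
      have heq : f * cc - (u + cc * f) = -u := by ring
      rw [heq]
      exact neg_mem hu
  have e2 : ((R ⧸ (I ^ (n+1) : Submodule R R)) ⧸ LinearMap.range φ) ≃ₗ[R] R ⧸ (T : Submodule R R) :=
    (Submodule.quotEquivOfEq _ _ hrange).trans
      (Submodule.quotientQuotientEquivQuotient (I ^ (n+1) : Submodule R R) T le_sup_left)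
  calc hlen R (R ⧸ I ^ (n + 1))
      = hlen R (LinearMap.range φ) + hlen R ((R ⧸ (I ^ (n+1) : Submodule R R)) ⧸ LinearMap.range φ) :=
        hlen_add _
    _ = hlen R (R ⧸ I ^ n) + hlen R (R ⧸ (T : Submodule R R)) := by
        rw [← hlen_congr e1, hlen_congr e2]

end Step





section Analysis

lemma ratio_tendsto (k : ℕ) :
    Tendsto (fun n : ℕ => ((n : ℝ) / ((n : ℝ) + 1)) ^ k) atTop (nhds 1) := by
  have h0 : Tendsto (fun n : ℕ => (n : ℝ) / ((n : ℝ) + 1)) atTop (nhds 1) := by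
    have h1 := tendsto_one_div_add_atTop_nhds_zero_nat (𝕜 := ℝ)
    have h2 : Tendsto (fun n : ℕ => 1 - 1 / ((n : ℝ) + 1)) atTop (nhds (1 - 0)) :=
      tendsto_const_nhds.sub h1
    rw [sub_zero] at h2
    apply h2.congr
    intro n
    have hpos : (0 : ℝ) < (n : ℝ) + 1 := by positivity
    field_simp
    ring
  have := h0.pow k
  rwa [one_pow] at this

lemma delta_eq (k : ℕ) (x : ℝ) :
    (x + 1) ^ (k + 1) - x ^ (k + 1) = ∑ i ∈ range (k + 1), (x + 1) ^ i * x ^ (k - i) := by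
  have h := geom_sum₂_mul (x + 1) x (k + 1)
  have h2 : (x + 1) - x = 1 := by ring
  rw [h2, mul_one] at h
  rw [← h]
  apply Finset.sum_congr rfl
  intro i hi
  congr 1

lemma delta_lb (k : ℕ) (n : ℕ) :
    ((k : ℝ) + 1) * (n : ℝ) ^ k ≤ ((n : ℝ) + 1) ^ (k + 1) - (n : ℝ) ^ (k + 1) := by
  rw [delta_eq]
  have hterm : ∀ i ∈ range (k + 1), (n : ℝ) ^ k ≤ ((n : ℝ) + 1) ^ i * (n : ℝ) ^ (k - i) := by
    intro i hi
    rw [mem_range] at hi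
    have hik : i ≤ k := Nat.lt_succ_iff.mp hi
    calc (n : ℝ) ^ k = (n : ℝ) ^ i * (n : ℝ) ^ (k - i) := by
          rw [← pow_add]
          congr 1
          omega
      _ ≤ ((n : ℝ) + 1) ^ i * (n : ℝ) ^ (k - i) := by
          apply mul_le_mul_of_nonneg_right _ (by positivity)
          exact pow_le_pow_left₀ (by positivity) (by linarith) i
  calc ((k : ℝ) + 1) * (n : ℝ) ^ k = ∑ _i ∈ range (k + 1), (n : ℝ) ^ k := by
        rw [Finset.sum_const, Finset.card_range]
        push_cast
        ring
    _ ≤ _ := Finset.sum_le_sum hterm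

lemma delta_ub (k : ℕ) (n : ℕ) :
    ((n : ℝ) + 1) ^ (k + 1) - (n : ℝ) ^ (k + 1) ≤ ((k : ℝ) + 1) * ((n : ℝ) + 1) ^ k := by
  rw [delta_eq]
  have hterm : ∀ i ∈ range (k + 1), ((n : ℝ) + 1) ^ i * (n : ℝ) ^ (k - i) ≤ ((n : ℝ) + 1) ^ k := by
    intro i hi
    rw [mem_range] at hi
    have hik : i ≤ k := Nat.lt_succ_iff.mp hi
    calc ((n : ℝ) + 1) ^ i * (n : ℝ) ^ (k - i) ≤ ((n : ℝ) + 1) ^ i * ((n : ℝ) + 1) ^ (k - i) := by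
          apply mul_le_mul_of_nonneg_left _ (by positivity)
          exact pow_le_pow_left₀ (by positivity) (by linarith) _
      _ = ((n : ℝ) + 1) ^ k := by
          rw [← pow_add]
          congr 1
          omega
  calc ∑ i ∈ range (k + 1), ((n : ℝ) + 1) ^ i * (n : ℝ) ^ (k - i)
      ≤ ∑ _i ∈ range (k + 1), ((n : ℝ) + 1) ^ k := Finset.sum_le_sum hterm
    _ = ((k : ℝ) + 1) * ((n : ℝ) + 1) ^ k := by
        rw [Finset.sum_const, Finset.card_range]
        push_cast
        ring

lemma delta_pos (k : ℕ) (n : ℕ) : 0 < ((n : ℝ) + 1) ^ (k + 1) - (n : ℝ) ^ (k + 1) := by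
  have h := delta_lb k n
  rcases Nat.eq_zero_or_pos n with rfl | hn
  · norm_num
  · have : (0 : ℝ) < ((k : ℝ) + 1) * (n : ℝ) ^ k := by positivity
    linarith

lemma delta_div_tendsto (k : ℕ) :
    Tendsto (fun n : ℕ => (((n : ℝ) + 1) ^ (k + 1) - (n : ℝ) ^ (k + 1)) / ((n : ℝ) + 1) ^ k)
      atTop (nhds ((k : ℝ) + 1)) := by
  have hupper : ∀ n : ℕ,
      (((n : ℝ) + 1) ^ (k + 1) - (n : ℝ) ^ (k + 1)) / ((n : ℝ) + 1) ^ k ≤ (k : ℝ) + 1 := by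
    intro n
    rw [div_le_iff₀ (by positivity)]
    calc _ ≤ ((k : ℝ) + 1) * ((n : ℝ) + 1) ^ k := delta_ub k n
      _ = _ := by ring
  have hlower : ∀ n : ℕ,
      ((k : ℝ) + 1) * ((n : ℝ) / ((n : ℝ) + 1)) ^ k ≤
        (((n : ℝ) + 1) ^ (k + 1) - (n : ℝ) ^ (k + 1)) / ((n : ℝ) + 1) ^ k := by
    intro n
    rw [le_div_iff₀ (by positivity), div_pow, mul_comm ((k : ℝ) + 1) _, mul_assoc]
    have hx : (n : ℝ) ^ k / ((n : ℝ) + 1) ^ k * (((k : ℝ) + 1) * ((n : ℝ) + 1) ^ k) =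
        ((k : ℝ) + 1) * (n : ℝ) ^ k := by
      field_simp
    rw [hx]
    exact delta_lb k n
  have hlo : Tendsto (fun n : ℕ => ((k : ℝ) + 1) * ((n : ℝ) / ((n : ℝ) + 1)) ^ k) atTop
      (nhds (((k : ℝ) + 1) * 1)) := tendsto_const_nhds.mul (ratio_tendsto k)
  rw [mul_one] at hlo
  exact tendsto_of_tendsto_of_tendsto_of_le_of_le hlo tendsto_const_nhds
    (fun n => hlower n) (fun n => hupper n)

lemma stolz_aux (d : ℕ) (hd : 1 ≤ d) (L A : ℕ → ℕ) (N₀ : ℕ)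
    (hrec : ∀ n ≥ N₀, L (n + 1) = L n + A (n + 1)) (e e' : ℝ)
    (hL : Tendsto (fun n : ℕ => ((Nat.factorial d : ℝ) * (L n : ℝ)) / (n : ℝ) ^ d)
      atTop (nhds e))
    (hA : Tendsto (fun n : ℕ => ((Nat.factorial (d - 1) : ℝ) * (A n : ℝ)) / (n : ℝ) ^ (d - 1))
      atTop (nhds e')) :
    e' = e := by
  obtain ⟨k, rfl⟩ : ∃ k, d = k + 1 := ⟨d - 1, (Nat.succ_pred_eq_of_pos hd).symm⟩
  simp only [Nat.add_sub_cancel] at hA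
  have hkfacpos : (0 : ℝ) < (Nat.factorial k : ℝ) := by
    exact_mod_cast Nat.factorial_pos k
  have hdfacpos : (0 : ℝ) < (Nat.factorial (k + 1) : ℝ) := by
    exact_mod_cast Nat.factorial_pos (k + 1)
  set ℓ : ℝ := e' / (Nat.factorial (k + 1) : ℝ) with hℓ
  -- Step 1 : a n / n^k → e'/k!
  have ha1 : Tendsto (fun n : ℕ => (A n : ℝ) / (n : ℝ) ^ k) atTop
      (nhds (e' / (Nat.factorial k : ℝ))) := by
    have h1 := hA.const_mul (((Nat.factorial k : ℝ))⁻¹)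
    rw [inv_mul_eq_div] at h1
    apply h1.congr
    intro n
    rw [inv_mul_eq_div, mul_div_assoc, mul_div_cancel_left₀ _ (ne_of_gt hkfacpos)]
  -- Step 2 : shifted
  have ha2 : Tendsto (fun n : ℕ => (A (n + 1) : ℝ) / ((n : ℝ) + 1) ^ k) atTop
      (nhds (e' / (Nat.factorial k : ℝ))) := by
    have := (tendsto_add_atTop_iff_nat (f := fun n : ℕ => (A n : ℝ) / (n : ℝ) ^ k) 1).mpr ha1
    apply this.congr
    intro n
    push_cast
    ring_nf
  -- Step 3 : a (n+1) / Δ n → ℓ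
  set Δ : ℕ → ℝ := fun n => ((n : ℝ) + 1) ^ (k + 1) - (n : ℝ) ^ (k + 1) with hΔdef
  have hΔpos : ∀ n : ℕ, 0 < Δ n := fun n => delta_pos k n
  have hr : Tendsto (fun n : ℕ => (A (n + 1) : ℝ) / Δ n) atTop (nhds ℓ) := by
    have hs := delta_div_tendsto k
    have hsinv : Tendsto (fun n : ℕ => (Δ n / ((n : ℝ) + 1) ^ k)⁻¹) atTop
        (nhds (((k : ℝ) + 1))⁻¹) :=
      hs.inv₀ (by positivity)
    have hmul := ha2.mul hsinv
    have hval : e' / (Nat.factorial k : ℝ) * ((k : ℝ) + 1)⁻¹ = ℓ := by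
      rw [hℓ, Nat.factorial_succ]
      push_cast
      rw [← div_eq_mul_inv, div_div]
      ring_nf
    rw [hval] at hmul
    apply hmul.congr
    intro n
    have h1 : ((n : ℝ) + 1) ^ k ≠ 0 := by positivity
    have h2 : Δ n ≠ 0 := ne_of_gt (hΔpos n)
    field_simp
  -- Step 4 : telescoping
  set v : ℕ → ℝ := fun n => (L n : ℝ) with hvdef
  set w : ℕ → ℝ := fun n => (n : ℝ) ^ (k + 1) with hwdef
  have hwΔ : ∀ n : ℕ, w (n + 1) = w n + Δ n := by
    intro n
    simp only [hwdef, hΔdef]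
    push_cast
    ring
  have hwnonneg : ∀ n : ℕ, 0 ≤ w n := fun n => by positivity
  have hwmono : ∀ m n : ℕ, m ≤ n → w m ≤ w n := by
    intro m n hmn
    apply pow_le_pow_left₀ (by positivity)
    exact_mod_cast hmn
  -- Step 5 : the main limit
  have hmain : Tendsto (fun n : ℕ => v n / w n) atTop (nhds ℓ) := by
    rw [Metric.tendsto_atTop]
    intro ε hε
    have hε2 : 0 < ε / 2 := by linarith
    obtain ⟨N₁, hN₁⟩ := (Metric.tendsto_atTop.mp hr) (ε / 2) hε2
    set N₂ := max N₀ N₁ with hN₂def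
    have hkey : ∀ n, N₂ ≤ n → |v n - v N₂ - ℓ * (w n - w N₂)| ≤ ε / 2 * (w n - w N₂) := by
      intro n hn
      induction n, hn using Nat.le_induction with
      | base => simp
      | succ n hn ih =>
        have hrecn : v (n + 1) = v n + (A (n + 1) : ℝ) := by
          have := hrec n (le_trans (le_max_left _ _) hn)
          simp only [hvdef]
          exact_mod_cast congrArg (fun m : ℕ => (m : ℝ)) this
        have hdist := hN₁ n (le_trans (le_max_right _ _) hn)
        rw [Real.dist_eq] at hdist
        have hΔn := hΔpos n
        have hest : |(A (n + 1) : ℝ) - ℓ * Δ n| ≤ ε / 2 * Δ n := by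
          have h1 : |(A (n + 1) : ℝ) / Δ n - ℓ| * Δ n ≤ ε / 2 * Δ n :=
            mul_le_mul_of_nonneg_right (le_of_lt hdist) (le_of_lt hΔn)
          calc |(A (n + 1) : ℝ) - ℓ * Δ n|
              = |((A (n + 1) : ℝ) / Δ n - ℓ) * Δ n| := by
                congr 1
                field_simp
            _ = |(A (n + 1) : ℝ) / Δ n - ℓ| * |Δ n| := abs_mul _ _
            _ = |(A (n + 1) : ℝ) / Δ n - ℓ| * Δ n := by rw [abs_of_pos hΔn]
            _ ≤ ε / 2 * Δ n := h1
        calc |v (n + 1) - v N₂ - ℓ * (w (n + 1) - w N₂)|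
            = |(v n - v N₂ - ℓ * (w n - w N₂)) + ((A (n + 1) : ℝ) - ℓ * Δ n)| := by
              rw [hrecn, hwΔ n]
              ring_nf
          _ ≤ |v n - v N₂ - ℓ * (w n - w N₂)| + |(A (n + 1) : ℝ) - ℓ * Δ n| := abs_add_le _ _
          _ ≤ ε / 2 * (w n - w N₂) + ε / 2 * Δ n := add_le_add ih hest
          _ = ε / 2 * (w (n + 1) - w N₂) := by rw [hwΔ n]; ring
    set C := |v N₂ - ℓ * w N₂| with hC
    have hCnn : 0 ≤ C := abs_nonneg _
    have hwtop : Tendsto w atTop atTop := by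
      have h1 : Tendsto (fun x : ℝ => x ^ (k + 1)) atTop atTop :=
        tendsto_pow_atTop (Nat.succ_ne_zero k)
      exact h1.comp tendsto_natCast_atTop_atTop
    have hev := (hwtop.eventually_ge_atTop (2 * C / ε + 1)).and (eventually_ge_atTop N₂)
    obtain ⟨N₃, hN₃⟩ := eventually_atTop.mp hev
    refine ⟨N₃, fun n hn => ?_⟩
    obtain ⟨hwn, hnN₂⟩ := hN₃ n hn
    have hwpos : 0 < w n := by
      have : (0 : ℝ) ≤ 2 * C / ε := by positivity
      linarith
    have hbound : |v n - ℓ * w n| ≤ C + ε / 2 * w n := by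
      have h1 := hkey n hnN₂
      have h2 : v n - ℓ * w n = (v n - v N₂ - ℓ * (w n - w N₂)) + (v N₂ - ℓ * w N₂) := by ring
      calc |v n - ℓ * w n| ≤ |v n - v N₂ - ℓ * (w n - w N₂)| + |v N₂ - ℓ * w N₂| := by
            rw [h2]; exact abs_add_le _ _
        _ ≤ ε / 2 * (w n - w N₂) + C := add_le_add h1 le_rfl
        _ ≤ ε / 2 * w n + C := by
            have := hwnonneg N₂
            nlinarith
        _ = C + ε / 2 * w n := by ring
    rw [Real.dist_eq]
    have hdiv : |v n / w n - ℓ| = |v n - ℓ * w n| / w n := by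
      calc |v n / w n - ℓ| = |(v n - ℓ * w n) / w n| := by
            congr 1
            field_simp
        _ = |v n - ℓ * w n| / |w n| := abs_div _ _
        _ = |v n - ℓ * w n| / w n := by rw [abs_of_pos hwpos]
    rw [hdiv]
    have hfinal : |v n - ℓ * w n| / w n ≤ C / w n + ε / 2 := by
      rw [div_add' _ _ _ (ne_of_gt hwpos), div_le_div_iff₀ hwpos hwpos]
      nlinarith [hbound, hwpos]
    have hCsmall : C / w n < ε / 2 := by
      rw [div_lt_iff₀ hwpos]
      have hkey2 : ε / 2 * (2 * C / ε + 1) = C + ε / 2 := by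
        field_simp
      have hle : ε / 2 * (2 * C / ε + 1) ≤ ε / 2 * w n :=
        mul_le_mul_of_nonneg_left hwn (by linarith)
      linarith
    calc |v n - ℓ * w n| / w n ≤ C / w n + ε / 2 := hfinal
      _ < ε / 2 + ε / 2 := by linarith
      _ = ε := by ring
  -- Step 6 : conclude
  have hfinal : Tendsto (fun n : ℕ => ((Nat.factorial (k + 1) : ℝ) * (L n : ℝ)) / (n : ℝ) ^ (k + 1))
      atTop (nhds ((Nat.factorial (k + 1) : ℝ) * ℓ)) := by
    have := hmain.const_mul ((Nat.factorial (k + 1) : ℝ))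
    apply this.congr
    intro n
    rw [mul_div_assoc]
  have he : e = (Nat.factorial (k + 1) : ℝ) * ℓ := tendsto_nhds_unique hL hfinal
  rw [he, hℓ, mul_div_cancel₀ _ (ne_of_gt hdfacpos)]

end Analysis


/-- If `f ∈ I` is superficial for the `m`-primary ideal `I`, is a nonzerodivisor and
`dim R/(f) = dim R - 1`, then `e(I·(R/(f)), R/(f)) = e(I, R)`. -/
theorem superficial_multiplicity_eq (R : Type*) [CommRing R] [IsNoetherianRing R]
    [IsLocalRing R] (d : ℕ) (hd1 : 1 ≤ d) (hd : ringKrullDim R = d)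
    (I : Ideal R) (hprim : I.radical = IsLocalRing.maximalIdeal R)
    (f : R) (hfI : f ∈ I) (hsup : Superficial I f) (hnzd : f ∈ nonZeroDivisors R)
    (hdq : ringKrullDim (R ⧸ Ideal.span {f}) = (d - 1 : ℕ))
    (e e' : ℝ)
    (heI : HasHSMultiplicity R I d e)
    (heq : HasHSMultiplicity (R ⧸ Ideal.span {f})
      (I.map (Ideal.Quotient.mk (Ideal.span {f}))) (d - 1) e') :
    e' = e := by
  classical
  -- identify the quotient-ring lengths with lengths over `R`
  have hcomap : ∀ n : ℕ,
      ((I.map (Ideal.Quotient.mk (Ideal.span {f}))) ^ n).comap (Ideal.Quotient.mk (Ideal.span {f}))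
        = I ^ n ⊔ Ideal.span {f} := by
    intro n
    rw [← Ideal.map_pow, Ideal.comap_map_of_surjective _ Ideal.Quotient.mk_surjective,
      ← RingHom.ker_eq_comap_bot, Ideal.mk_ker]
  have KEY1 : ∀ n : ℕ,
      moduleLength (R ⧸ Ideal.span {f})
        ((R ⧸ Ideal.span {f}) ⧸ (I.map (Ideal.Quotient.mk (Ideal.span {f}))) ^ n)
      = moduleLength R (R ⧸ (I ^ n ⊔ Ideal.span {f})) := by
    intro n
    rw [moduleLength_eq_hlen, moduleLength_eq_hlen, hlen_quot_quot, hcomap n]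
  -- finiteness of all the lengths involved
  obtain ⟨t, ht⟩ : ∃ t, (IsLocalRing.maximalIdeal R) ^ t ≤ I := by
    have hfg : (I.radical).FG := IsNoetherian.noetherian _
    obtain ⟨s, hs⟩ := Ideal.exists_radical_pow_le_of_fg I hfg
    exact ⟨s, by rwa [hprim] at hs⟩
  have hfin : ∀ (J : Ideal R) (n : ℕ), I ^ n ≤ J → hlen R (R ⧸ J) ≠ ⊤ := by
    intro J n hJ
    refine hlen_quot_ne_top (t * n) J ?_
    calc (IsLocalRing.maximalIdeal R) ^ (t * n)
        = ((IsLocalRing.maximalIdeal R) ^ t) ^ n := pow_mul _ _ _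
      _ ≤ I ^ n := Ideal.pow_right_mono ht n
      _ ≤ J := hJ
  obtain ⟨N₀, hN₀⟩ := colon_eventually_eq I f hfI hsup hnzd
  have KEY2 : ∀ n ≥ N₀, moduleLength R (R ⧸ I ^ (n + 1)) =
      moduleLength R (R ⧸ I ^ n) +
        moduleLength R (R ⧸ (I ^ (n + 1) ⊔ Ideal.span {f})) := by
    intro n hn
    have hstep := hlen_step I f hfI n (hN₀ n hn)
    rw [moduleLength_eq_hlen, moduleLength_eq_hlen, moduleLength_eq_hlen, hstep,
      ENat.toNat_add (hfin _ n le_rfl) (hfin _ (n + 1) le_sup_left)]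
  have hA : Filter.Tendsto
      (fun n : ℕ => ((Nat.factorial (d - 1) : ℝ) *
        (moduleLength R (R ⧸ (I ^ n ⊔ Ideal.span {f})) : ℝ)) / (n : ℝ) ^ (d - 1))
      Filter.atTop (nhds e') := by
    apply Filter.Tendsto.congr _ heq
    intro n
    rw [KEY1 n]
  exact stolz_aux d hd1 (fun n => moduleLength R (R ⧸ I ^ n))
    (fun n => moduleLength R (R ⧸ (I ^ n ⊔ Ideal.span {f}))) N₀ KEY2 e e' heI hA
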